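/- arXiv:2407.12670 — 2 statements merged into one kernel-verified Lean document; each statement's English description precedes it below -/
import Mathlib

section
/- Let Q ∈ ℂ^{m×n} (n < m) have orthonormal columns, z ∈ ℂ^m, u = QQ*z ≠ 0, v = (I − QQ*)z ≠ 0, and ν = ‖z‖. Then λ⁺ = (1 + ν² + √(1 + ν⁴ + 2ν² − 4‖v‖²))/2 and λ⁻ = (1 + ν² − √(1 + ν⁴ + 2ν² − 4‖v‖²))/2 are eigenvalues of QQ* + zz*, with corresponding eigenvectors of the form αu + v for suitable α ∈ ℂ. -/
open Matrix

lemma vecMulVec_mulVec' {m : ℕ} (a b w : Fin m → ℂ) :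
    vecMulVec a b *ᵥ w = (b ⬝ᵥ w) • a := by
  ext i
  simp only [mulVec, vecMulVec_apply, dotProduct, Pi.smul_apply, smul_eq_mul,
    Finset.sum_mul]
  exact Finset.sum_congr rfl fun j _ => by ring

set_option maxHeartbeats 1000000 in
/-- `λ⁺ = (1+ν²+√(1+ν⁴+2ν²−4‖v‖²))/2` and
`λ⁻ = (1+ν²−√(1+ν⁴+2ν²−4‖v‖²))/2` are eigenvalues of `Q Qᴴ + z zᴴ`,
with eigenvectors of the form `αu + v`. -/
theorem stmt6 {m n : ℕ} (hmn : n < m) (Q : Matrix (Fin m) (Fin n) ℂ)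
    (hQ : Qᴴ * Q = 1) (z u v : Fin m → ℂ)
    (hu : u = (Q * Qᴴ) *ᵥ z) (hv : v = z - u)
    (hu0 : u ≠ 0) (hv0 : v ≠ 0)
    (ν : ℝ) (hν : ν = Real.sqrt (∑ i, ‖z i‖ ^ 2)) :
    (∃ α : ℂ, α • u + v ≠ 0 ∧
      (Q * Qᴴ + vecMulVec z (star z)) *ᵥ (α • u + v)
        = (((1 + ν ^ 2 + Real.sqrt (1 + ν ^ 4 + 2 * ν ^ 2 - 4 * ∑ i, ‖v i‖ ^ 2)) / 2 : ℝ) : ℂ)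
            • (α • u + v)) ∧
    (∃ α : ℂ, α • u + v ≠ 0 ∧
      (Q * Qᴴ + vecMulVec z (star z)) *ᵥ (α • u + v)
        = (((1 + ν ^ 2 - Real.sqrt (1 + ν ^ 4 + 2 * ν ^ 2 - 4 * ∑ i, ‖v i‖ ^ 2)) / 2 : ℝ) : ℂ)
            • (α • u + v)) := by
  set A : ℝ := ∑ i, ‖u i‖ ^ 2 with hA
  set B : ℝ := ∑ i, ‖v i‖ ^ 2 with hB
  have hP2 : (Q * Qᴴ) * (Q * Qᴴ) = Q * Qᴴ := by
    rw [Matrix.mul_assoc, ← Matrix.mul_assoc Qᴴ, hQ, Matrix.one_mul]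
  have hPH : (Q * Qᴴ)ᴴ = Q * Qᴴ := by simp [conjTranspose_mul, Matrix.mul_assoc]
  have hPu : (Q * Qᴴ) *ᵥ u = u := by rw [hu, mulVec_mulVec, hP2]
  have hPv : (Q * Qᴴ) *ᵥ v = 0 := by
    rw [hv, mulVec_sub, hPu, ← hu, sub_self]
  have hzuv : z = u + v := by rw [hv]; abel
  have h1 : star v ⬝ᵥ u = 0 := by
    have h := hPu
    calc star v ⬝ᵥ u = star v ⬝ᵥ ((Q * Qᴴ) *ᵥ u) := by rw [hPu]
      _ = (star v ᵥ* (Q * Qᴴ)) ⬝ᵥ u := dotProduct_mulVec _ _ _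
      _ = (star v ᵥ* (Q * Qᴴ)ᴴ) ⬝ᵥ u := by rw [hPH]
      _ = star ((Q * Qᴴ) *ᵥ v) ⬝ᵥ u := by rw [star_mulVec]
      _ = 0 := by rw [hPv]; simp
  have h2 : star u ⬝ᵥ v = 0 := by
    calc star u ⬝ᵥ v = star ((Q * Qᴴ) *ᵥ u) ⬝ᵥ v := by rw [hPu]
      _ = (star u ᵥ* (Q * Qᴴ)ᴴ) ⬝ᵥ v := by rw [star_mulVec]
      _ = star u ⬝ᵥ ((Q * Qᴴ)ᴴ *ᵥ v) := (dotProduct_mulVec _ _ _).symm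
      _ = 0 := by rw [hPH, hPv, dotProduct_zero]
  have hAu : star u ⬝ᵥ u = (A : ℂ) := by
    simp only [dotProduct, Pi.star_apply, hA]
    push_cast
    exact Finset.sum_congr rfl fun i _ => by
      rw [Complex.star_def, ← Complex.normSq_eq_conj_mul_self, Complex.normSq_eq_norm_sq]
      norm_num [Complex.norm_def]
  have hBv : star v ⬝ᵥ v = (B : ℂ) := by
    simp only [dotProduct, Pi.star_apply, hB]
    push_cast
    exact Finset.sum_congr rfl fun i _ => by
      rw [Complex.star_def, ← Complex.normSq_eq_conj_mul_self, Complex.normSq_eq_norm_sq]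
      norm_num [Complex.norm_def]
  have hzu : star z ⬝ᵥ u = (A : ℂ) := by
    rw [hzuv, star_add, add_dotProduct, hAu, h1, add_zero]
  have hzv : star z ⬝ᵥ v = (B : ℂ) := by
    rw [hzuv, star_add, add_dotProduct, hBv, h2, zero_add]
  have hνsq : ν ^ 2 = A + B := by
    have hzz : star z ⬝ᵥ z = ((A + B : ℝ) : ℂ) := by
      nth_rewrite 2 [hzuv]
      rw [dotProduct_add, hzu, hzv]; push_cast; ring
    have hzz' : star z ⬝ᵥ z = ((∑ i, ‖z i‖ ^ 2 : ℝ) : ℂ) := by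
      simp only [dotProduct, Pi.star_apply]
      push_cast
      exact Finset.sum_congr rfl fun i _ => by
        rw [Complex.star_def, ← Complex.normSq_eq_conj_mul_self, Complex.normSq_eq_norm_sq]
        norm_num [Complex.norm_def]
    have : (∑ i, ‖z i‖ ^ 2 : ℝ) = A + B := by
      exact_mod_cast hzz'.symm.trans hzz
    rw [hν, Real.sq_sqrt (by positivity), this]
  have hA0 : 0 < A := by
    obtain ⟨i, hi⟩ := Function.ne_iff.mp hu0
    exact Finset.sum_pos' (fun j _ => by positivity)
      ⟨i, Finset.mem_univ i, by exact pow_pos (norm_pos_iff.mpr hi) 2⟩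
  have hB0 : 0 ≤ B := by positivity
  have hD0 : (0:ℝ) ≤ 1 + ν ^ 4 + 2 * ν ^ 2 - 4 * B := by
    nlinarith [sq_nonneg (1 - B), hA0.le, hB0]
  have hsq : Real.sqrt (1 + ν ^ 4 + 2 * ν ^ 2 - 4 * B) ^ 2
      = 1 + ν ^ 4 + 2 * ν ^ 2 - 4 * B := Real.sq_sqrt hD0
  have key : ∀ lam : ℝ, lam ^ 2 - (1 + ν ^ 2) * lam + B = 0 →
      (∃ α : ℂ, α • u + v ≠ 0 ∧
        (Q * Qᴴ + vecMulVec z (star z)) *ᵥ (α • u + v)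
          = ((lam : ℝ) : ℂ) • (α • u + v)) := by
    intro lam hlam
    have hlam1 : lam ≠ 1 := by
      intro h; rw [h] at hlam; nlinarith
    have hl1c : (lam : ℂ) - 1 ≠ 0 := by
      rw [sub_ne_zero]
      exact_mod_cast hlam1
    set α : ℂ := (lam : ℂ) / ((lam : ℂ) - 1) with hα
    have hlamC : (lam : ℂ) ^ 2 - (1 + (A : ℂ) + (B : ℂ)) * lam + B = 0 := by
      have h' : lam ^ 2 - (1 + A + B) * lam + B = 0 := by
        rw [hνsq] at hlam; linarith
      exact_mod_cast h'
    have e2 : α * A + B = (lam : ℂ) := by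
      rw [hα]
      field_simp
      linear_combination -hlamC
    have e1 : α + (lam : ℂ) = (lam : ℂ) * α := by
      rw [hα]
      field_simp
      ring
    refine ⟨α, ?_, ?_⟩
    · intro h
      have h1' : v = -(α • u) := eq_neg_of_add_eq_zero_right h
      have h2' : (0 : Fin m → ℂ) = -(α • u) := by
        rw [← hPv, h1', Matrix.mulVec_neg, mulVec_smul, hPu]
      exact hv0 (h1'.trans h2'.symm)
    · rw [add_mulVec, mulVec_add, mulVec_smul, hPu, hPv, add_zero,
        vecMulVec_mulVec', dotProduct_add, dotProduct_smul, hzu, hzv,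
        smul_eq_mul, hzuv]
      funext i
      simp only [Pi.add_apply, Pi.smul_apply, smul_eq_mul]
      linear_combination (u i + v i) * e2 + (u i) * e1
  constructor
  · apply key
    nlinarith [hsq]
  · apply key
    nlinarith [hsq]
end

section
/- Let Q ∈ ℂ^{m×n} (n < m) have orthonormal columns and let z ∈ ℂ^m be nonzero with z ∉ Range(Q). Then among all real scalings δ > 0, the choice δ = 1/‖z‖ minimizes the spectral condition number κ₂([Q δz]). -/
open Matrix

/-- The matrix `[Q z]`: `Q` with the column `z` appended. -/
def appendCol {m n : ℕ} (Q : Matrix (Fin m) (Fin n) ℂ) (z : Fin m → ℂ) :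
    Matrix (Fin m) (Fin (n + 1)) ℂ :=
  Matrix.of fun i j => Fin.lastCases (z i) (fun k => Q i k) j

/-- The spectral condition number: ratio of largest to smallest singular value,
singular values being the square roots of the eigenvalues of `MᴴM`. -/
noncomputable def cond2 {m n : ℕ} (M : Matrix (Fin m) (Fin (n + 1)) ℂ) : ℝ :=
  (⨆ i, Real.sqrt ((isHermitian_conjTranspose_mul_self M).eigenvalues i)) /
    (⨅ i, Real.sqrt ((isHermitian_conjTranspose_mul_self M).eigenvalues i))

private lemma star_dot_self {m : ℕ} (y : Fin m → ℂ) :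
    star y ⬝ᵥ y = ((∑ i, ‖y i‖ ^ 2 : ℝ) : ℂ) := by
  simp only [dotProduct, Pi.star_apply, Complex.star_def]
  push_cast
  congr 1; funext i
  rw [← Complex.normSq_eq_conj_mul_self]
  rw [← Complex.sq_norm]
  push_cast
  rfl

private lemma appendCol_mulVec {m n : ℕ} (Q : Matrix (Fin m) (Fin n) ℂ) (y : Fin m → ℂ)
    (x : Fin n → ℂ) (c : ℂ) :
    appendCol Q y *ᵥ Fin.snoc x c = Q *ᵥ x + c • y := by
  funext i
  simp [appendCol, mulVec, dotProduct, Fin.sum_univ_castSucc, mul_comm]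

private lemma appendCol_conjT_mulVec {m n : ℕ} (Q : Matrix (Fin m) (Fin n) ℂ) (y : Fin m → ℂ)
    (u : Fin m → ℂ) :
    (appendCol Q y)ᴴ *ᵥ u = Fin.snoc (Qᴴ *ᵥ u) (star y ⬝ᵥ u) := by
  funext j
  induction j using Fin.lastCases with
  | last => simp [appendCol, conjTranspose, mulVec, dotProduct, mul_comm]
  | cast k => simp [appendCol, conjTranspose, mulVec, dotProduct]

private lemma smul_snoc {n : ℕ} (a : ℂ) (x : Fin n → ℂ) (c : ℂ) :
    a • (Fin.snoc x c : Fin (n+1) → ℂ) = Fin.snoc (a • x) (a * c) := by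
  funext j
  induction j using Fin.lastCases with
  | last => simp
  | cast k => simp

private lemma dot_swap {m n : ℕ} (Q : Matrix (Fin m) (Fin n) ℂ) (y : Fin m → ℂ) (x : Fin n → ℂ) :
    star y ⬝ᵥ (Q *ᵥ x) = star (Qᴴ *ᵥ y) ⬝ᵥ x := by
  rw [dotProduct_mulVec, star_mulVec, conjTranspose_conjTranspose]

private lemma dot_swap' {m n : ℕ} (Q : Matrix (Fin m) (Fin n) ℂ) (y : Fin m → ℂ) (x : Fin n → ℂ) :
    star (Q *ᵥ x) ⬝ᵥ y = star x ⬝ᵥ (Qᴴ *ᵥ y) := by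
  rw [star_mulVec, ← dotProduct_mulVec]

private lemma cauchy_dot {n : ℕ} (x w : Fin n → ℂ) :
    ‖star x ⬝ᵥ w‖ ≤ Real.sqrt (∑ k, ‖x k‖ ^ 2) * Real.sqrt (∑ k, ‖w k‖ ^ 2) := by
  have h := norm_inner_le_norm (𝕜 := ℂ) ((WithLp.equiv 2 _).symm x) ((WithLp.equiv 2 _).symm w)
  rw [show inner ℂ ((WithLp.equiv 2 _).symm x) ((WithLp.equiv 2 _).symm w) = star x ⬝ᵥ w from by rw [dotProduct_comm]; rfl] at h
  simpa [EuclideanSpace.norm_eq] using h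

private lemma exists_eig_eq {k : ℕ} {A : Matrix (Fin k) (Fin k) ℂ} (hA : A.IsHermitian)
    {v : Fin k → ℂ} (hv : v ≠ 0) {μ : ℝ} (h : A *ᵥ v = (μ : ℂ) • v) :
    ∃ i, hA.eigenvalues i = μ := by
  by_contra hc
  push_neg at hc
  have hdet : (A - (μ : ℂ) • 1).det = 0 := by
    rw [← Matrix.exists_mulVec_eq_zero_iff]
    exact ⟨v, hv, by rw [Matrix.sub_mulVec, Matrix.smul_mulVec, Matrix.one_mulVec, h,
      sub_self]⟩
  have hU : (hA.eigenvectorUnitary : Matrix (Fin k) (Fin k) ℂ) *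
      (star (hA.eigenvectorUnitary : Matrix (Fin k) (Fin k) ℂ)) = 1 :=
    (Matrix.mem_unitaryGroup_iff).mp hA.eigenvectorUnitary.2
  have key : A - (μ : ℂ) • 1 =
      (hA.eigenvectorUnitary : Matrix (Fin k) (Fin k) ℂ) *
        (diagonal (fun i => (hA.eigenvalues i : ℂ) - μ)) *
        (star (hA.eigenvectorUnitary : Matrix (Fin k) (Fin k) ℂ)) := by
    conv_lhs => rw [hA.spectral_theorem, Unitary.conjStarAlgAut_apply]
    have : (diagonal (fun i => (hA.eigenvalues i : ℂ) - μ)) =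
        diagonal (RCLike.ofReal ∘ hA.eigenvalues) - (μ : ℂ) • 1 := by
      ext a b
      by_cases hab : a = b <;>
        simp [diagonal, hab, Matrix.one_apply, Function.comp]
    rw [this, Matrix.mul_sub, Matrix.sub_mul, Matrix.mul_smul, Matrix.smul_mul, mul_one, hU]
  have : (A - (μ : ℂ) • 1).det = ∏ i, ((hA.eigenvalues i : ℂ) - μ) := by
    rw [key, det_mul, det_mul, det_diagonal,
      mul_comm ((hA.eigenvectorUnitary : Matrix (Fin k) (Fin k) ℂ).det),
      mul_assoc, ← det_mul, hU, det_one, mul_one]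
  rw [this] at hdet
  obtain ⟨i, -, hi⟩ := Finset.prod_eq_zero_iff.mp hdet
  exact hc i (by exact_mod_cast sub_eq_zero.mp hi)

private lemma exists_unit_eig {m k : ℕ} (M : Matrix (Fin m) (Fin k) ℂ) (i : Fin k) :
    ∃ v : Fin k → ℂ, (∑ j, ‖v j‖ ^ 2) = 1 ∧
      (isHermitian_conjTranspose_mul_self M).eigenvalues i = ∑ j, ‖(M *ᵥ v) j‖ ^ 2 := by
  set hA := isHermitian_conjTranspose_mul_self M
  refine ⟨⇑(hA.eigenvectorBasis i), ?_, ?_⟩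
  · have h1 : ‖hA.eigenvectorBasis i‖ = 1 := hA.eigenvectorBasis.orthonormal.1 i
    rw [EuclideanSpace.norm_eq] at h1
    have := congrArg (fun t : ℝ => t ^ 2) h1
    simpa [Real.sq_sqrt (Finset.sum_nonneg fun _ _ => sq_nonneg _)] using this
  · have h2 := hA.eigenvalues_eq i
    rw [h2]
    have h3 : (Mᴴ * M) *ᵥ ⇑(hA.eigenvectorBasis i) = Mᴴ *ᵥ (M *ᵥ ⇑(hA.eigenvectorBasis i)) := by
      rw [← mulVec_mulVec]
    rw [h3]
    have h4 : star ⇑(hA.eigenvectorBasis i) ⬝ᵥ (Mᴴ *ᵥ (M *ᵥ ⇑(hA.eigenvectorBasis i))) =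
        star (M *ᵥ ⇑(hA.eigenvectorBasis i)) ⬝ᵥ (M *ᵥ ⇑(hA.eigenvectorBasis i)) := by
      rw [star_mulVec, ← dotProduct_mulVec]
    rw [h4, star_dot_self]
    simp [← Complex.ofReal_pow]

private lemma star_dot_self' : True := trivial

set_option maxHeartbeats 1000000 in
private lemma eig_bounds {m n : ℕ} (Q : Matrix (Fin m) (Fin n) ℂ) (hQ : Qᴴ * Q = 1) (y : Fin m → ℂ)
    {α B d : ℝ} (hα : α = ∑ j, ‖y j‖ ^ 2) (hB : B = ∑ k, ‖(Qᴴ *ᵥ y) k‖ ^ 2)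
    (hd : d = Real.sqrt ((1 - α) ^ 2 + 4 * B)) (i : Fin (n + 1)) :
    ((1 + α) - d) / 2 ≤ (isHermitian_conjTranspose_mul_self (appendCol Q y)).eigenvalues i ∧
      (isHermitian_conjTranspose_mul_self (appendCol Q y)).eigenvalues i ≤ ((1 + α) + d) / 2 := by
  obtain ⟨v, hv1, hv2⟩ := exists_unit_eig (appendCol Q y) i
  set x : Fin n → ℂ := Fin.init v with hx
  set c : ℂ := v (Fin.last n) with hc
  have hsplit : v = Fin.snoc x c := (Fin.snoc_init_self v).symm
  set X : ℝ := ∑ k, ‖x k‖ ^ 2 with hX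
  set D : ℂ := star x ⬝ᵥ (Qᴴ *ᵥ y) with hD
  -- norm splitting
  have hnorm : X + ‖c‖ ^ 2 = 1 := by
    rw [← hv1, Fin.sum_univ_castSucc]
    congr 1
  have hXnn : 0 ≤ X := Finset.sum_nonneg fun _ _ => sq_nonneg _
  have hBnn : 0 ≤ B := hB ▸ Finset.sum_nonneg fun _ _ => sq_nonneg _
  have hαnn : 0 ≤ α := hα ▸ Finset.sum_nonneg fun _ _ => sq_nonneg _
  -- the Rayleigh value
  have hray : (isHermitian_conjTranspose_mul_self (appendCol Q y)).eigenvalues i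
      = X + 2 * (c * D).re + ‖c‖ ^ 2 * α := by
    rw [hv2, hsplit, appendCol_mulVec]
    have hcplx : ((∑ j, ‖(Q *ᵥ x + c • y) j‖ ^ 2 : ℝ) : ℂ)
        = ((X + 2 * (c * D).re + ‖c‖ ^ 2 * α : ℝ) : ℂ) := by
      rw [← star_dot_self]
      rw [star_add, add_dotProduct, dotProduct_add, dotProduct_add]
      rw [dot_swap' Q (Q *ᵥ x) x, mulVec_mulVec, hQ, one_mulVec, star_dot_self x, ← hX]
      rw [dotProduct_smul, dot_swap' Q y x, ← hD]
      rw [star_smul, smul_dotProduct, dot_swap Q y x]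
      simp only [smul_dotProduct, dotProduct_smul, smul_eq_mul]
      rw [star_dot_self y, ← hα]
      have h1 : star (Qᴴ *ᵥ y) ⬝ᵥ x = star D := by rw [hD, star_dotProduct]
      rw [h1]
      have h2 : c * D + star c * star D = ((2 * (c * D).re : ℝ) : ℂ) := by
        have : star c * star D = star (c * D) := by rw [star_mul']
        rw [this, Complex.star_def, Complex.add_conj]
        all_goals push_cast; ring
      have h3 : star c • (c • ((α : ℝ) : ℂ)) = ((‖c‖ ^ 2 * α : ℝ) : ℂ) := by
        rw [smul_eq_mul, smul_eq_mul, ← mul_assoc, Complex.star_def,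
          ← Complex.normSq_eq_conj_mul_self, ← Complex.sq_norm]
        push_cast
        rfl
      rw [smul_eq_mul, smul_eq_mul] at h3
      push_cast at h2 h3 ⊢
      linear_combination h2 + h3
    exact_mod_cast hcplx
  -- real-variable setup
  set b : ℝ := ‖c‖ with hb
  have hbnn : 0 ≤ b := norm_nonneg c
  set sX : ℝ := Real.sqrt X with hsX
  set sB : ℝ := Real.sqrt B with hsB
  have hsX2 : sX ^ 2 = X := Real.sq_sqrt hXnn
  have hsB2 : sB ^ 2 = B := Real.sq_sqrt hBnn
  have hsXnn : 0 ≤ sX := Real.sqrt_nonneg _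
  have hsBnn : 0 ≤ sB := Real.sqrt_nonneg _
  have hre : |(c * D).re| ≤ b * (sX * sB) := by
    calc |(c * D).re| ≤ ‖c * D‖ := Complex.abs_re_le_norm _
    _ = b * ‖D‖ := by rw [norm_mul]
    _ ≤ b * (sX * sB) := by
        apply mul_le_mul_of_nonneg_left _ hbnn
        have := cauchy_dot x (Qᴴ *ᵥ y)
        rw [← hX, ← hB] at this
        exact this
  obtain ⟨hre1, hre2⟩ := abs_le.mp hre
  have hdnn : 0 ≤ d := hd ▸ Real.sqrt_nonneg _
  have hd2 : d ^ 2 = (1 - α) ^ 2 + 4 * B := by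
    rw [hd]; exact Real.sq_sqrt (by positivity)
  have habs : |1 - α| ≤ d := by
    rw [hd, ← Real.sqrt_sq_eq_abs]
    exact Real.sqrt_le_sqrt (by nlinarith)
  rw [abs_le] at habs
  have hp : 0 ≤ ((α - 1) + d) / 2 := by linarith [habs.1]
  have hq : 0 ≤ ((1 - α) + d) / 2 := by linarith [habs.2]
  have hpq : (((α - 1) + d) / 2) * (((1 - α) + d) / 2) = B := by nlinarith [hd2]
  set sp : ℝ := Real.sqrt (((α - 1) + d) / 2) with hsp
  set sq : ℝ := Real.sqrt (((1 - α) + d) / 2) with hsq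
  have hsp2 : sp ^ 2 = ((α - 1) + d) / 2 := Real.sq_sqrt hp
  have hsq2 : sq ^ 2 = ((1 - α) + d) / 2 := Real.sq_sqrt hq
  have hspnn : 0 ≤ sp := Real.sqrt_nonneg _
  have hsqnn : 0 ≤ sq := Real.sqrt_nonneg _
  have hspq : sp * sq = sB := by
    rw [hsp, hsq, ← Real.sqrt_mul hp, hpq, hsB]
  have hre1' : -(b * (sX * sB)) ≤ (c * D).re := hre1
  have hre2' : (c * D).re ≤ b * (sX * sB) := hre2
  constructor
  · rw [hray, ← sub_nonneg]
    have e1 : X + 2 * (c * D).re + ‖c‖ ^ 2 * α - ((1 + α) - d) / 2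
        = ((((1 - α) + d) / 2) * X + (((α - 1) + d) / 2) * b ^ 2 + 2 * (c * D).re) := by
      linear_combination (((1 + α) - d) / 2) * hnorm
    rw [e1]
    have e2 : sq ^ 2 * sX ^ 2 + sp ^ 2 * b ^ 2 - 2 * (b * (sX * sB))
        ≤ (((1 - α) + d) / 2) * X + (((α - 1) + d) / 2) * b ^ 2 + 2 * (c * D).re := by
      rw [hsq2, hsp2, hsX2]
      linarith [hre1']
    have e3 : (0:ℝ) ≤ sq ^ 2 * sX ^ 2 + sp ^ 2 * b ^ 2 - 2 * (b * (sX * sB)) := by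
      have : sq ^ 2 * sX ^ 2 + sp ^ 2 * b ^ 2 - 2 * (b * (sX * sB))
          = (sq * sX - sp * b) ^ 2 := by rw [← hspq]; ring
      rw [this]; positivity
    exact le_trans e3 e2
  · rw [hray, ← sub_nonneg]
    have e1 : ((1 + α) + d) / 2 - (X + 2 * (c * D).re + ‖c‖ ^ 2 * α)
        = ((((α - 1) + d) / 2) * X + (((1 - α) + d) / 2) * b ^ 2 - 2 * (c * D).re) := by
      linear_combination (-(((1 + α) + d) / 2)) * hnorm
    rw [e1]
    have e2 : sp ^ 2 * sX ^ 2 + sq ^ 2 * b ^ 2 - 2 * (b * (sX * sB))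
        ≤ (((α - 1) + d) / 2) * X + (((1 - α) + d) / 2) * b ^ 2 - 2 * (c * D).re := by
      rw [hsq2, hsp2, hsX2]
      linarith [hre2']
    have e3 : (0:ℝ) ≤ sp ^ 2 * sX ^ 2 + sq ^ 2 * b ^ 2 - 2 * (b * (sX * sB)) := by
      have : sp ^ 2 * sX ^ 2 + sq ^ 2 * b ^ 2 - 2 * (b * (sX * sB))
          = (sp * sX - sq * b) ^ 2 := by rw [← hspq]; ring
      rw [this]; positivity
    exact le_trans e3 e2

private lemma snoc_ne_zero_left {n : ℕ} {x : Fin n → ℂ} (hx : x ≠ 0) (c : ℂ) :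
    (Fin.snoc x c : Fin (n+1) → ℂ) ≠ 0 := by
  intro h
  apply hx
  funext k
  have := congrFun h (Fin.castSucc k)
  simpa using this

private lemma eig_attain {m n : ℕ} (hn : 0 < n) (Q : Matrix (Fin m) (Fin n) ℂ) (hQ : Qᴴ * Q = 1)
    (y : Fin m → ℂ) {α B lam : ℝ} (hα : α = ∑ j, ‖y j‖ ^ 2)
    (hB : B = ∑ k, ‖(Qᴴ *ᵥ y) k‖ ^ 2) (hroot : (lam - 1) * (lam - α) = B) :
    ∃ i, (isHermitian_conjTranspose_mul_self (appendCol Q y)).eigenvalues i = lam := by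
  have hmul : ∀ u : Fin (n+1) → ℂ, ((appendCol Q y)ᴴ * appendCol Q y) *ᵥ u
      = (appendCol Q y)ᴴ *ᵥ (appendCol Q y *ᵥ u) := fun u => by
    rw [← mulVec_mulVec]
  set w : Fin n → ℂ := Qᴴ *ᵥ y with hw
  by_cases hw0 : w = 0
  · have hB0 : B = 0 := by
      rw [hB, hw0]; simp
    rw [hB0] at hroot
    rcases mul_eq_zero.mp hroot with h1 | h1
    · -- lam = 1
      have hlam : lam = 1 := by linarith [sub_eq_zero.mp h1]
      subst hlam
      apply exists_eig_eq _ (v := Fin.snoc (Pi.single (⟨0, hn⟩ : Fin n) 1) (0:ℂ))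
      · apply snoc_ne_zero_left
        intro h
        have := congrFun h ⟨0, hn⟩
        simp [Pi.single_apply] at this
      · rw [hmul, appendCol_mulVec]
        simp only [zero_smul, add_zero]
        rw [appendCol_conjT_mulVec, mulVec_mulVec, hQ, one_mulVec]
        rw [dot_swap, ← hw, hw0]
        simp only [star_zero, zero_dotProduct]
        rw [Complex.ofReal_one, one_smul]
    · -- lam = α
      have hlam : lam = α := by linarith [sub_eq_zero.mp h1]
      subst hlam
      apply exists_eig_eq _ (v := Fin.snoc (0 : Fin n → ℂ) (1:ℂ))
      · intro h
        have := congrFun h (Fin.last n)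
        simpa using this
      · rw [hmul, appendCol_mulVec]
        simp only [mulVec_zero, zero_add, one_smul]
        rw [appendCol_conjT_mulVec, ← hw, hw0, star_dot_self, ← hα, smul_snoc]
        simp
  · -- general eigenvector (w, lam - 1)
    apply exists_eig_eq _ (v := Fin.snoc w ((lam : ℂ) - 1))
    · exact snoc_ne_zero_left hw0 _
    · rw [hmul, appendCol_mulVec, smul_snoc, appendCol_conjT_mulVec, mulVec_add, mulVec_smul,
        mulVec_mulVec, hQ, one_mulVec, dotProduct_add, dotProduct_smul, dot_swap, ← hw,
        star_dot_self w, star_dot_self y, ← hα, ← hB]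
      funext j
      induction j using Fin.lastCases with
      | last =>
        simp only [Fin.snoc_last, smul_eq_mul]
        have h := congrArg (fun r : ℝ => (r : ℂ)) hroot
        push_cast at h ⊢
        linear_combination -h
      | cast k =>
        simp only [Fin.snoc_castSucc, Pi.add_apply, Pi.smul_apply, smul_eq_mul]
        ring

private lemma cond2_eq_aux {m n : ℕ} (hn : 0 < n) (Q : Matrix (Fin m) (Fin n) ℂ) (hQ : Qᴴ * Q = 1)
    (z : Fin m → ℂ) (s : ℝ) (hs : 0 < s) {Z Bz : ℝ}
    (hZ : Z = ∑ i, ‖z i‖ ^ 2) (hBz : Bz = ∑ k, ‖(Qᴴ *ᵥ z) k‖ ^ 2) (hBlt : Bz < Z) :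
    cond2 (appendCol Q (((s : ℝ) : ℂ) • z)) =
      Real.sqrt (((1 + s ^ 2 * Z) + Real.sqrt ((1 - s ^ 2 * Z) ^ 2 + 4 * (s ^ 2 * Bz))) / 2) /
      Real.sqrt (((1 + s ^ 2 * Z) - Real.sqrt ((1 - s ^ 2 * Z) ^ 2 + 4 * (s ^ 2 * Bz))) / 2) := by
  have hBnn : 0 ≤ Bz := hBz ▸ Finset.sum_nonneg fun _ _ => sq_nonneg _
  set y : Fin m → ℂ := ((s : ℝ) : ℂ) • z with hy
  have hα : s ^ 2 * Z = ∑ j, ‖y j‖ ^ 2 := by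
    rw [hZ, Finset.mul_sum]
    congr 1; funext j
    rw [hy]
    simp [norm_smul, mul_pow, sq_abs]
  have hB : s ^ 2 * Bz = ∑ k, ‖(Qᴴ *ᵥ y) k‖ ^ 2 := by
    rw [hBz, Finset.mul_sum]
    congr 1; funext k
    rw [hy, mulVec_smul]
    simp [norm_smul, mul_pow, sq_abs]
  set d : ℝ := Real.sqrt ((1 - s ^ 2 * Z) ^ 2 + 4 * (s ^ 2 * Bz)) with hd
  have hd' : d = Real.sqrt ((1 - s ^ 2 * Z) ^ 2 + 4 * (s ^ 2 * Bz)) := hd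
  have hdnn : 0 ≤ d := Real.sqrt_nonneg _
  have hd2 : d ^ 2 = (1 - s ^ 2 * Z) ^ 2 + 4 * (s ^ 2 * Bz) := Real.sq_sqrt (by positivity)
  have hZpos : 0 < Z := lt_of_le_of_lt hBnn hBlt
  have hsZpos : 0 < s ^ 2 * Z := mul_pos (pow_pos hs 2) hZpos
  have hdlt : d < 1 + s ^ 2 * Z := by
    have h1 : (1 - s ^ 2 * Z) ^ 2 + 4 * (s ^ 2 * Bz) < (1 + s ^ 2 * Z) ^ 2 := by
      nlinarith [mul_pos (pow_pos hs 2) (sub_pos.mpr hBlt)]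
    have h2 : d < Real.sqrt ((1 + s ^ 2 * Z) ^ 2) := by
      rw [hd]; exact Real.sqrt_lt_sqrt (by positivity) h1
    rwa [Real.sqrt_sq (by linarith)] at h2
  have hlamMpos : 0 < ((1 + s ^ 2 * Z) - d) / 2 := by linarith
  have hbd := fun i => eig_bounds Q hQ y hα hB hd' i
  have hattP : ∃ i, (isHermitian_conjTranspose_mul_self (appendCol Q y)).eigenvalues i
      = ((1 + s ^ 2 * Z) + d) / 2 := by
    apply eig_attain hn Q hQ y hα hB
    linear_combination (1/4 : ℝ) * hd2
  have hattM : ∃ i, (isHermitian_conjTranspose_mul_self (appendCol Q y)).eigenvalues i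
      = ((1 + s ^ 2 * Z) - d) / 2 := by
    apply eig_attain hn Q hQ y hα hB
    linear_combination (1/4 : ℝ) * hd2
  set f : Fin (n + 1) → ℝ :=
    fun i => Real.sqrt ((isHermitian_conjTranspose_mul_self (appendCol Q y)).eigenvalues i) with hf
  have hba : BddAbove (Set.range f) := (Set.finite_range f).bddAbove
  have hbb : BddBelow (Set.range f) := (Set.finite_range f).bddBelow
  have hsup : (⨆ i, f i) = Real.sqrt (((1 + s ^ 2 * Z) + d) / 2) := by
    apply le_antisymm
    · exact ciSup_le fun i => Real.sqrt_le_sqrt (hbd i).2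
    · obtain ⟨i, hi⟩ := hattP
      have hfi : f i = Real.sqrt (((1 + s ^ 2 * Z) + d) / 2) := congrArg Real.sqrt hi
      rw [← hfi]
      exact le_ciSup hba i
  have hinf : (⨅ i, f i) = Real.sqrt (((1 + s ^ 2 * Z) - d) / 2) := by
    apply le_antisymm
    · obtain ⟨i, hi⟩ := hattM
      have hfi : f i = Real.sqrt (((1 + s ^ 2 * Z) - d) / 2) := congrArg Real.sqrt hi
      rw [← hfi]
      exact ciInf_le hbb i
    · exact le_ciInf fun i => Real.sqrt_le_sqrt (hbd i).1
  show (⨆ i, f i) / (⨅ i, f i) = _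
  rw [hsup, hinf]

private lemma aux_dlt {Z Bz s : ℝ} (hs : 0 < s) (hBnn : 0 ≤ Bz) (hBlt : Bz < Z) :
    Real.sqrt ((1 - s ^ 2 * Z) ^ 2 + 4 * (s ^ 2 * Bz)) < 1 + s ^ 2 * Z := by
  have hZpos : 0 < Z := lt_of_le_of_lt hBnn hBlt
  have h1 : (1 - s ^ 2 * Z) ^ 2 + 4 * (s ^ 2 * Bz) < (1 + s ^ 2 * Z) ^ 2 := by
    nlinarith [mul_pos (pow_pos hs 2) (sub_pos.mpr hBlt)]
  have h2 : Real.sqrt ((1 - s ^ 2 * Z) ^ 2 + 4 * (s ^ 2 * Bz))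
      < Real.sqrt ((1 + s ^ 2 * Z) ^ 2) := Real.sqrt_lt_sqrt (by positivity) h1
  rwa [Real.sqrt_sq (by nlinarith [mul_pos (pow_pos hs 2) hZpos])] at h2

private lemma aux_k1 {Z sZ δ : ℝ} (h : sZ ^ 2 = Z) : 2 * δ * sZ ≤ 1 + δ ^ 2 * Z := by
  nlinarith [sq_nonneg (1 - δ * sZ)]

private lemma aux_key {δ s0 sZ sB dδ Z : ℝ} (hs0 : 0 ≤ s0)
    (k1 : 2 * δ * sZ ≤ 1 + δ ^ 2 * Z) (k2 : 2 * δ * sB ≤ dδ) (k3 : s0 * sZ = 1) :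
    (1 + s0 * sB) * δ ≤ ((1 + δ ^ 2 * Z) + dδ) / 2 * s0 := by
  have k4 := mul_le_mul_of_nonneg_right (add_le_add k1 k2) hs0
  have k5 : 2 * δ * sZ * s0 = 2 * δ := by linear_combination 2 * δ * k3
  nlinarith [k4, k5]

set_option maxHeartbeats 1600000 in
lemma scalar_key {Z Bz δ : ℝ} (hδ : 0 < δ) (hBnn : 0 ≤ Bz) (hBlt : Bz < Z) :
    Real.sqrt (((1 + ((Real.sqrt Z)⁻¹) ^ 2 * Z) +
        Real.sqrt ((1 - ((Real.sqrt Z)⁻¹) ^ 2 * Z) ^ 2 + 4 * (((Real.sqrt Z)⁻¹) ^ 2 * Bz))) / 2) /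
      Real.sqrt (((1 + ((Real.sqrt Z)⁻¹) ^ 2 * Z) -
        Real.sqrt ((1 - ((Real.sqrt Z)⁻¹) ^ 2 * Z) ^ 2 + 4 * (((Real.sqrt Z)⁻¹) ^ 2 * Bz))) / 2) ≤
    Real.sqrt (((1 + δ ^ 2 * Z) +
        Real.sqrt ((1 - δ ^ 2 * Z) ^ 2 + 4 * (δ ^ 2 * Bz))) / 2) /
      Real.sqrt (((1 + δ ^ 2 * Z) -
        Real.sqrt ((1 - δ ^ 2 * Z) ^ 2 + 4 * (δ ^ 2 * Bz))) / 2) := by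
  have hZpos : 0 < Z := lt_of_le_of_lt hBnn hBlt
  set sZ : ℝ := Real.sqrt Z with hsZdef
  have hsZpos : 0 < sZ := Real.sqrt_pos.mpr hZpos
  have hsZ2 : sZ ^ 2 = Z := Real.sq_sqrt hZpos.le
  set s0 : ℝ := sZ⁻¹ with hs0def
  have hs0pos : 0 < s0 := inv_pos.mpr hsZpos
  have h01 : s0 ^ 2 * Z = 1 := by
    rw [hs0def, ← hsZ2]; field_simp
  set sB : ℝ := Real.sqrt Bz with hsBdef
  have hsB2 : sB ^ 2 = Bz := Real.sq_sqrt hBnn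
  have hsBnn : 0 ≤ sB := Real.sqrt_nonneg _
  have hGnn : 0 ≤ Z - Bz := sub_nonneg.mpr hBlt.le
  have hd0lt := aux_dlt hs0pos hBnn hBlt
  have hdδlt := aux_dlt hδ hBnn hBlt
  set d0 : ℝ := Real.sqrt ((1 - s0 ^ 2 * Z) ^ 2 + 4 * (s0 ^ 2 * Bz)) with hd0def
  set dδ : ℝ := Real.sqrt ((1 - δ ^ 2 * Z) ^ 2 + 4 * (δ ^ 2 * Bz)) with hdδdef
  have hd02 : d0 ^ 2 = (1 - s0 ^ 2 * Z) ^ 2 + 4 * (s0 ^ 2 * Bz) := Real.sq_sqrt (by positivity)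
  have hdδ2 : dδ ^ 2 = (1 - δ ^ 2 * Z) ^ 2 + 4 * (δ ^ 2 * Bz) := Real.sq_sqrt (by positivity)
  have hd0nn : 0 ≤ d0 := Real.sqrt_nonneg _
  have hdδnn : 0 ≤ dδ := Real.sqrt_nonneg _
  set lamP0 : ℝ := ((1 + s0 ^ 2 * Z) + d0) / 2 with hlamP0def
  set lamM0 : ℝ := ((1 + s0 ^ 2 * Z) - d0) / 2 with hlamM0def
  set lamPδ : ℝ := ((1 + δ ^ 2 * Z) + dδ) / 2 with hlamPδdef
  set lamMδ : ℝ := ((1 + δ ^ 2 * Z) - dδ) / 2 with hlamMδdef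
  have hlamM0pos : 0 < lamM0 := half_pos (sub_pos.mpr hd0lt)
  have hlamMδpos : 0 < lamMδ := half_pos (sub_pos.mpr hdδlt)
  have hMP0 : lamM0 ≤ lamP0 :=
    div_le_div_of_nonneg_right
      ((sub_le_self _ hd0nn).trans (le_add_of_nonneg_right hd0nn)) (by norm_num)
  have hMPδ : lamMδ ≤ lamPδ :=
    div_le_div_of_nonneg_right
      ((sub_le_self _ hdδnn).trans (le_add_of_nonneg_right hdδnn)) (by norm_num)
  have hlamP0pos : 0 < lamP0 := lt_of_lt_of_le hlamM0pos hMP0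
  have hlamPδpos : 0 < lamPδ := lt_of_lt_of_le hlamMδpos hMPδ
  have hPM0 : lamP0 * lamM0 = s0 ^ 2 * (Z - Bz) := by
    rw [hlamP0def, hlamM0def]
    linear_combination (-(1/4) : ℝ) * hd02
  have hPMδ : lamPδ * lamMδ = δ ^ 2 * (Z - Bz) := by
    rw [hlamPδdef, hlamMδdef]
    linear_combination (-(1/4) : ℝ) * hdδ2
  have hd0eq : d0 = 2 * s0 * sB := by
    have e1 : (1 - s0 ^ 2 * Z) ^ 2 + 4 * (s0 ^ 2 * Bz) = (2 * s0 * sB) ^ 2 := by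
      rw [h01]
      linear_combination (-(4 * s0 ^ 2)) * hsB2
    rw [hd0def, e1, Real.sqrt_sq (by positivity)]
  have hlamP0eq : lamP0 = 1 + s0 * sB := by
    rw [hlamP0def, h01, hd0eq]; ring
  have k1 : 2 * δ * sZ ≤ 1 + δ ^ 2 * Z := aux_k1 hsZ2
  have k2 : 2 * δ * sB ≤ dδ := by
    have e2 : (2 * δ * sB) ^ 2 = 4 * (δ ^ 2 * Bz) := by
      rw [mul_pow, mul_pow, hsB2]; ring
    have e3 : Real.sqrt (4 * (δ ^ 2 * Bz)) = 2 * δ * sB := by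
      rw [← e2, Real.sqrt_sq (by positivity)]
    rw [← e3, hdδdef]
    exact Real.sqrt_le_sqrt (le_add_of_nonneg_left (sq_nonneg _))
  have k3 : s0 * sZ = 1 := inv_mul_cancel₀ (ne_of_gt hsZpos)
  have key : lamP0 * δ ≤ lamPδ * s0 := by
    rw [hlamP0eq, hlamPδdef]
    exact aux_key hs0pos.le k1 k2 k3
  rw [div_le_div_iff₀ (Real.sqrt_pos.mpr hlamM0pos) (Real.sqrt_pos.mpr hlamMδpos)]
  rw [← Real.sqrt_mul hlamP0pos.le, ← Real.sqrt_mul hlamPδpos.le]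
  apply Real.sqrt_le_sqrt
  have hC : 0 < lamP0 * lamPδ := mul_pos hlamP0pos hlamPδpos
  apply le_of_mul_le_mul_right _ hC
  have k6 : (lamP0 * δ) ^ 2 * (Z - Bz) ≤ (lamPδ * s0) ^ 2 * (Z - Bz) :=
    mul_le_mul_of_nonneg_right (pow_le_pow_left₀ (by positivity) key 2) hGnn
  calc lamP0 * lamMδ * (lamP0 * lamPδ) = (lamP0 * δ) ^ 2 * (Z - Bz) := by
        linear_combination lamP0 ^ 2 * hPMδ
    _ ≤ (lamPδ * s0) ^ 2 * (Z - Bz) := k6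
    _ = lamPδ * lamM0 * (lamP0 * lamPδ) := by linear_combination (- lamPδ ^ 2) * hPM0

private lemma cond2_n0 {m : ℕ} (Q : Matrix (Fin m) (Fin 0) ℂ) (y : Fin m → ℂ)
    (hy : 0 < ∑ i, ‖y i‖ ^ 2) : cond2 (appendCol Q y) = 1 := by
  have h0 : ∀ x : Fin m, appendCol Q y x 0 = y x := fun x => by
    show Fin.lastCases (y x) (fun k => Q x k) (Fin.last 0) = y x
    exact Fin.lastCases_last
  have hentry : ((appendCol Q y)ᴴ * appendCol Q y) 0 0 = star y ⬝ᵥ y := by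
    simp [mul_apply, conjTranspose_apply, dotProduct, h0, mul_comm]
  have hdet := (isHermitian_conjTranspose_mul_self (appendCol Q y)).det_eq_prod_eigenvalues
  rw [det_fin_one, hentry, Fin.prod_univ_one, star_dot_self] at hdet
  have heig : (isHermitian_conjTranspose_mul_self (appendCol Q y)).eigenvalues 0
      = ∑ i, ‖y i‖ ^ 2 := by
    have h := congrArg Complex.re hdet
    simpa [← Complex.ofReal_pow] using h.symm
  have hall : ∀ i : Fin (0 + 1), i = 0 := fun i => Fin.ext (by omega)
  set f : Fin (0 + 1) → ℝ :=
    fun i => Real.sqrt ((isHermitian_conjTranspose_mul_self (appendCol Q y)).eigenvalues i) with hf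
  have hsup : (⨆ i, f i) = f 0 :=
    le_antisymm (ciSup_le fun i => by rw [hall i]) (le_ciSup (Set.finite_range f).bddAbove 0)
  have hinf : (⨅ i, f i) = f 0 :=
    le_antisymm (ciInf_le (Set.finite_range f).bddBelow 0) (le_ciInf fun i => by rw [hall i])
  show (⨆ i, f i) / (⨅ i, f i) = 1
  rw [hsup, hinf]
  have hf0 : f 0 = Real.sqrt (∑ i, ‖y i‖ ^ 2) := congrArg Real.sqrt heig
  rw [hf0]
  exact div_self (ne_of_gt (Real.sqrt_pos.mpr hy))

/-- among all scalings `δ > 0`, the choice `δ = 1/‖z‖` minimizes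
the spectral condition number `κ₂([Q δz])`. -/

theorem stmt13 {m n : ℕ} (hmn : n < m) (Q : Matrix (Fin m) (Fin n) ℂ)
    (hQ : Qᴴ * Q = 1) (z : Fin m → ℂ) (hz : z ≠ 0)
    (hzQ : ¬∃ c : Fin n → ℂ, z = Q *ᵥ c) :
    ∀ δ : ℝ, 0 < δ →
      cond2 (appendCol Q ((((Real.sqrt (∑ i, ‖z i‖ ^ 2))⁻¹ : ℝ) : ℂ) • z)) ≤
        cond2 (appendCol Q ((δ : ℂ) • z)) := by
  intro δ hδ
  have hzpos : (0:ℝ) < ∑ i, ‖z i‖ ^ 2 := by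
    obtain ⟨i, hi⟩ : ∃ i, z i ≠ 0 := by
      by_contra hc; push_neg at hc; exact hz (funext hc)
    exact Finset.sum_pos' (fun j _ => sq_nonneg _) ⟨i, Finset.mem_univ i, pow_pos (norm_pos_iff.mpr hi) 2⟩
  have hsmul : ∀ s : ℝ, (∑ i, ‖((((s : ℝ) : ℂ)) • z) i‖ ^ 2) = s ^ 2 * ∑ i, ‖z i‖ ^ 2 := by
    intro s
    rw [Finset.mul_sum]
    congr 1; funext j
    simp [norm_smul, mul_pow, sq_abs]
  rcases Nat.eq_zero_or_pos n with rfl | hn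
  · rw [cond2_n0 Q _ (by
        rw [hsmul]
        exact mul_pos (pow_pos (inv_pos.mpr (Real.sqrt_pos.mpr hzpos)) 2) hzpos),
      cond2_n0 Q _ (by rw [hsmul]; exact mul_pos (pow_pos hδ 2) hzpos)]
  · have hBnn : (0:ℝ) ≤ ∑ k, ‖(Qᴴ *ᵥ z) k‖ ^ 2 := Finset.sum_nonneg fun _ _ => sq_nonneg _
    have hBlt : (∑ k, ‖(Qᴴ *ᵥ z) k‖ ^ 2) < ∑ i, ‖z i‖ ^ 2 := by
      have hrne : z - Q *ᵥ (Qᴴ *ᵥ z) ≠ 0 := by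
        intro h
        exact hzQ ⟨Qᴴ *ᵥ z, by rwa [sub_eq_zero] at h⟩
      have hrpos : (0:ℝ) < ∑ i, ‖(z - Q *ᵥ (Qᴴ *ᵥ z)) i‖ ^ 2 := by
        obtain ⟨i, hi⟩ : ∃ i, (z - Q *ᵥ (Qᴴ *ᵥ z)) i ≠ 0 := by
          by_contra hc; push_neg at hc; exact hrne (funext hc)
        exact Finset.sum_pos' (fun j _ => sq_nonneg _) ⟨i, Finset.mem_univ i, pow_pos (norm_pos_iff.mpr hi) 2⟩
      have hkey : star (z - Q *ᵥ (Qᴴ *ᵥ z)) ⬝ᵥ (z - Q *ᵥ (Qᴴ *ᵥ z))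
          = (((∑ i, ‖z i‖ ^ 2) - ∑ k, ‖(Qᴴ *ᵥ z) k‖ ^ 2 : ℝ) : ℂ) := by
        rw [star_sub, sub_dotProduct, dotProduct_sub, dotProduct_sub]
        rw [dot_swap Q z (Qᴴ *ᵥ z)]
        rw [dot_swap' Q z (Qᴴ *ᵥ z)]
        rw [dot_swap' Q (Q *ᵥ (Qᴴ *ᵥ z)) (Qᴴ *ᵥ z), mulVec_mulVec, hQ, one_mulVec]
        rw [star_dot_self z, star_dot_self (Qᴴ *ᵥ z)]
        push_cast
        ring
      have hreal : (∑ i, ‖(z - Q *ᵥ (Qᴴ *ᵥ z)) i‖ ^ 2)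
          = (∑ i, ‖z i‖ ^ 2) - ∑ k, ‖(Qᴴ *ᵥ z) k‖ ^ 2 :=
        Complex.ofReal_injective (by rw [← star_dot_self]; exact hkey)
      linarith [hrpos, hreal]
    rw [cond2_eq_aux hn Q hQ z ((Real.sqrt (∑ i, ‖z i‖ ^ 2))⁻¹)
        (inv_pos.mpr (Real.sqrt_pos.mpr hzpos)) rfl rfl hBlt,
      cond2_eq_aux hn Q hQ z δ hδ rfl rfl hBlt]
    exact scalar_key hδ hBnn hBlt
end
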